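/- Consider a k-player iterated game with convex decision sets K_1, …, K_k ⊆ ℝⁿ and differentiable payoff functions f_i : K_1 × ⋯ × K_k → ℝ. Fix η > 0 and 1 ≤ w < T, and let (x_t^1, …, x_t^k) for t = 1, …, T be the joint strategies produced when each player i runs an online algorithm on the loss sequence f_{i,t}(x) := −f_i(x_t^1, …, x_t^{i−1}, x, x_t^{i+1}, …, x_t^k), achieving w-local regret Σ_{t=1}^T ‖∇_{K_i,η} F_{t,w}^i(x_t^i)‖² ≤ R_i, where F_{t,w}^i(x) := (1/w) Σ_{j=0}^{w−1} f_{i,t−j}(x). Then there exists t with w ≤ t ≤ T such that for every player i ∈ [k], ‖∇_{K_i,η} F_{t,w}^i(x_t^i)‖ ≤ sqrt( (Σ_{i=1}^k R_i) / (T − w) ); that is, (x_t^1, …, x_t^k) is an ε-approximate (η, w)-smoothed local equilibrium with ε = sqrt(Σ_i R_i / (T − w)). -/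

import Mathlib

open RealInnerProductSpace

/- Euclidean (nearest-point) projection onto a set `K`.  For a nonempty closed
convex set in a complete inner product space this is the usual orthogonal
projection onto `K`. -/
open Classical in
noncomputable def projOn {E : Type*} [NormedAddCommGroup E] [InnerProductSpace ℝ E]
    (K : Set E) (u : E) : E :=
  if h : ∃ v, v ∈ K ∧ ∀ w ∈ K, ‖u - v‖ ≤ ‖u - w‖ then h.choose else u

/- The `(K, η)`-projected gradient of `f` at `x`:
`∇_{K,η} f(x) = (1/η) (x − Π_K[x − η ∇f(x)])`. -/
noncomputable def projGrad {E : Type*} [NormedAddCommGroup E] [InnerProductSpace ℝ E]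
    [CompleteSpace E] (K : Set E) (η : ℝ) (f : E → ℝ) (x : E) : E :=
  (1 / η) • (x - projOn K (x - η • gradient f x))

/- The sliding-window time average `F_{t,w}(x) = (1/w) ∑_{i=0}^{w-1} f_{t-i}(x)`,
where natural-number subtraction together with `f 0 = 0` encodes the convention
that `f_t ≡ 0` for `t ≤ 0`. -/
noncomputable def Favg {E : Type*} (f : ℕ → E → ℝ) (w t : ℕ) (x : E) : ℝ :=
  (1 / (w : ℝ)) * ∑ i ∈ Finset.range w, f (t - i) x

/- The online loss shown to player `i` at round `t ≥ 1` of the iterated game: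
`f_{i,t}(y) = −f_i(x_t¹, …, x_t^{i−1}, y, x_t^{i+1}, …, x_t^k)` (and `0` for
`t = 0`, encoding `f_{i,t} ≡ 0` for `t ≤ 0`). -/
noncomputable def gameLoss {n k : ℕ}
    (f : Fin k → (Fin k → EuclideanSpace ℝ (Fin n)) → ℝ)
    (x : ℕ → Fin k → EuclideanSpace ℝ (Fin n)) (i : Fin k) (t : ℕ) :
    EuclideanSpace ℝ (Fin n) → ℝ :=
  if t = 0 then fun _ => 0 else fun y => -(f i (Function.update (x t) i y))

/-- Smoothed local equilibria from local-regret minimization: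
if in a `k`-player iterated game each player `i` attains `w`-local regret at
most `R i` on the losses `f_{i,t}`, then some joint strategy
`(x_t¹, …, x_t^k)` with `w ≤ t ≤ T` is an `ε`-approximate `(η, w)`-smoothed
local equilibrium with `ε = sqrt((∑ i, R i)/(T − w))`. -/
theorem smoothed_local_equilibrium {n k : ℕ}
    (K : Fin k → Set (EuclideanSpace ℝ (Fin n)))
    (hKcl : ∀ i, IsClosed (K i)) (hKconv : ∀ i, Convex ℝ (K i))
    (hKne : ∀ i, (K i).Nonempty)
    (f : Fin k → (Fin k → EuclideanSpace ℝ (Fin n)) → ℝ)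
    (hdiff : ∀ i, Differentiable ℝ (f i))
    (η : ℝ) (hη : 0 < η) (T w : ℕ) (hw : 1 ≤ w) (hwT : w < T)
    (x : ℕ → Fin k → EuclideanSpace ℝ (Fin n))
    (hxK : ∀ t i, 1 ≤ t → t ≤ T → x t i ∈ K i)
    (R : Fin k → ℝ)
    (hR : ∀ i, ∑ t ∈ Finset.Icc 1 T,
      ‖projGrad (K i) η (Favg (gameLoss f x i) w t) (x t i)‖ ^ 2 ≤ R i) :
    ∃ t, w ≤ t ∧ t ≤ T ∧ ∀ i,
      ‖projGrad (K i) η (Favg (gameLoss f x i) w t) (x t i)‖ ≤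
        Real.sqrt ((∑ i, R i) / ((T : ℝ) - w)) := by
  set g : ℕ → ℝ := fun t =>
    ∑ i, ‖projGrad (K i) η (Favg (gameLoss f x i) w t) (x t i)‖ ^ 2 with hg
  have hgnn : ∀ t, 0 ≤ g t := fun t =>
    Finset.sum_nonneg fun i _ => sq_nonneg _
  have hS : ∑ t ∈ Finset.Icc w T, g t ≤ ∑ i, R i := by
    calc ∑ t ∈ Finset.Icc w T, g t ≤ ∑ t ∈ Finset.Icc 1 T, g t := by
          apply Finset.sum_le_sum_of_subset_of_nonneg
          · intro t ht
            simp only [Finset.mem_Icc] at ht ⊢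
            exact ⟨le_trans hw ht.1, ht.2⟩
          · intro t _ _; exact hgnn t
      _ = ∑ i, ∑ t ∈ Finset.Icc 1 T,
            ‖projGrad (K i) η (Favg (gameLoss f x i) w t) (x t i)‖ ^ 2 :=
          Finset.sum_comm
      _ ≤ ∑ i, R i := Finset.sum_le_sum fun i _ => hR i
  have hSnn : 0 ≤ ∑ i, R i :=
    le_trans (Finset.sum_nonneg fun t _ => hgnn t) hS
  have hTw : (0 : ℝ) < (T : ℝ) - w := by
    have : (w : ℝ) < T := by exact_mod_cast hwT
    linarith
  have hne : (Finset.Icc w T).Nonempty := ⟨w, by simp [Finset.mem_Icc, hwT.le]⟩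
  have hcard : ((Finset.Icc w T).card : ℝ) = (T : ℝ) - w + 1 := by
    rw [Nat.card_Icc, Nat.cast_sub (by omega : w ≤ T + 1)]
    push_cast
    ring
  have key : ∃ t ∈ Finset.Icc w T, g t ≤ (∑ i, R i) / ((T : ℝ) - w) := by
    apply Finset.exists_le_of_sum_le hne
    calc ∑ t ∈ Finset.Icc w T, g t ≤ ∑ i, R i := hS
      _ ≤ ((Finset.Icc w T).card : ℝ) * ((∑ i, R i) / ((T : ℝ) - w)) := by
          rw [hcard]
          have h1 : ((T : ℝ) - w + 1) * ((∑ i, R i) / ((T : ℝ) - w))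
              = (∑ i, R i) + (∑ i, R i) / ((T : ℝ) - w) := by
            field_simp
          rw [h1]
          have : 0 ≤ (∑ i, R i) / ((T : ℝ) - w) := div_nonneg hSnn hTw.le
          linarith
      _ = ∑ _t ∈ Finset.Icc w T, (∑ i, R i) / ((T : ℝ) - w) := by
          rw [Finset.sum_const, nsmul_eq_mul]
  obtain ⟨t, ht, hgt⟩ := key
  rw [Finset.mem_Icc] at ht
  refine ⟨t, ht.1, ht.2, fun i => ?_⟩
  have h1 : ‖projGrad (K i) η (Favg (gameLoss f x i) w t) (x t i)‖ ^ 2 ≤ g t := by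
    rw [hg]
    exact Finset.single_le_sum
      (f := fun j => ‖projGrad (K j) η (Favg (gameLoss f x j) w t) (x t j)‖ ^ 2)
      (fun j _ => sq_nonneg _) (Finset.mem_univ i)
  have h2 : ‖projGrad (K i) η (Favg (gameLoss f x i) w t) (x t i)‖ ^ 2
      ≤ (∑ i, R i) / ((T : ℝ) - w) := le_trans h1 hgt
  calc ‖projGrad (K i) η (Favg (gameLoss f x i) w t) (x t i)‖
      = Real.sqrt (‖projGrad (K i) η (Favg (gameLoss f x i) w t) (x t i)‖ ^ 2) :=
        (Real.sqrt_sq (norm_nonneg _)).symm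
    _ ≤ Real.sqrt ((∑ i, R i) / ((T : ℝ) - w)) := Real.sqrt_le_sqrt h2
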